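/- arXiv:2208.02945 — 3 statements merged into one kernel-verified Lean document; each statement's English description precedes it below -/
import Mathlib

section
/- Theorem 1 (beam locking time, continuous-discrete case): Let N be a positive integer, let Q > 0, T_LR > 0, κ ∈ (0,1], let φ ∈ ℝ with sin φ ≠ 0, and let μ_ζ ∈ (0,1). Define T_L = sqrt((1/μ_ζ² − 1) / (2·κ·Q·T_LR·N²·sin²φ)). Then for a real random variable ε whose law is the centered Gaussian measure with variance κ·Q·T_LR, the average power ratio satisfies E[exp(−(N·T_L·sin φ)²·ε²)] = μ_ζ. -/
open MeasureTheory ProbabilityTheory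

lemma gauss_aux (v : NNReal) (hv : v ≠ 0) (c : ℝ) (hc : 0 < c) :
    ∫ x, Real.exp (-c * x ^ 2) ∂(gaussianReal 0 v) = (Real.sqrt (1 + 2 * c * v))⁻¹ := by
  rw [gaussianReal_of_var_ne_zero _ hv]
  have hd : gaussianPDF 0 v = fun x => ((gaussianPDFReal 0 v x).toNNReal : ENNReal) := by
    ext x; rw [gaussianPDF, ENNReal.ofReal]
  rw [hd, integral_withDensity_eq_integral_smul
    ((measurable_gaussianPDFReal 0 v).real_toNNReal)]
  have hv0 : (0:ℝ) < (v:ℝ) := by positivity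
  have hb : 0 < c + (2 * (v:ℝ))⁻¹ := by positivity
  have : ∀ x : ℝ, (gaussianPDFReal 0 v x).toNNReal • Real.exp (-c * x ^ 2)
      = (Real.sqrt (2 * Real.pi * v))⁻¹ * Real.exp (-(c + (2 * (v:ℝ))⁻¹) * x ^ 2) := by
    intro x
    rw [NNReal.smul_def, smul_eq_mul, Real.coe_toNNReal _ (gaussianPDFReal_nonneg 0 v x),
      gaussianPDFReal]
    rw [mul_assoc, ← Real.exp_add]
    ring_nf
  simp_rw [this]
  rw [integral_const_mul, integral_gaussian]
  rw [← Real.sqrt_inv, ← Real.sqrt_mul (by positivity), ← Real.sqrt_inv]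
  congr 1
  have hπ := Real.pi_pos
  field_simp
  ring

/-- Theorem 1 of the paper (continuous-discrete case): with the beam locking time
`T_L = sqrt((1/μζ² − 1) / (2 κ Q T_LR N² sin² φ))` and slope-prediction error
`ε ~ N(0, κ Q T_LR)`, the average power ratio `E[exp(−(N T_L sin φ)² ε²)]`
equals the prescribed drop `μζ`. -/
theorem beam_locking_time
    {Ω : Type*} [MeasurableSpace Ω] (μ : Measure Ω) [IsProbabilityMeasure μ]
    (N : ℕ) (hN : 0 < N) (Q T_LR κ : ℝ) (hQ : 0 < Q) (hT_LR : 0 < T_LR)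
    (hκ : κ ∈ Set.Ioc (0 : ℝ) 1)
    (φ : ℝ) (hφ : Real.sin φ ≠ 0) (μζ : ℝ) (hμζ : μζ ∈ Set.Ioo (0 : ℝ) 1)
    (T_L : ℝ)
    (hT_L : T_L = Real.sqrt ((1 / μζ ^ 2 - 1) /
        (2 * κ * Q * T_LR * (N : ℝ) ^ 2 * Real.sin φ ^ 2)))
    (ε : Ω → ℝ) (hε : μ.map ε = gaussianReal 0 (κ * Q * T_LR).toNNReal) :
    ∫ ω, Real.exp (-((N : ℝ) * T_L * Real.sin φ) ^ 2 * (ε ω) ^ 2) ∂μ = μζ := by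
  obtain ⟨hκ0, hκ1⟩ := hκ
  obtain ⟨hμ0, hμ1⟩ := hμζ
  have hκQT : 0 < κ * Q * T_LR := by positivity
  have hv : (κ * Q * T_LR).toNNReal ≠ 0 := by
    simp [Real.toNNReal_eq_zero, not_le, hκQT]
  have hεm : AEMeasurable ε μ := by
    by_contra h
    rw [Measure.map_of_not_aemeasurable h] at hε
    exact (IsProbabilityMeasure.ne_zero (gaussianReal 0 (κ * Q * T_LR).toNNReal)) hε.symm
  -- positivity of the argument of sqrt
  have harg : 0 < (1 / μζ ^ 2 - 1) / (2 * κ * Q * T_LR * (N : ℝ) ^ 2 * Real.sin φ ^ 2) := by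
    apply div_pos
    · have : μζ ^ 2 < 1 := by nlinarith
      have : 1 < 1 / μζ ^ 2 := by
        rw [lt_div_iff₀ (by positivity)]; linarith
      linarith
    · have hN' : (0:ℝ) < (N:ℝ) := by exact_mod_cast hN
      have : (0:ℝ) < Real.sin φ ^ 2 := by positivity
      positivity
  have hTL : 0 < T_L := by rw [hT_L]; exact Real.sqrt_pos.mpr harg
  have hc : 0 < ((N : ℝ) * T_L * Real.sin φ) ^ 2 := by
    have hN' : ((N:ℝ)) ≠ 0 := by exact_mod_cast hN.ne'
    positivity
  have hmap : ∫ x, Real.exp (-((N : ℝ) * T_L * Real.sin φ) ^ 2 * x ^ 2) ∂(μ.map ε)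
      = ∫ ω, Real.exp (-((N : ℝ) * T_L * Real.sin φ) ^ 2 * (ε ω) ^ 2) ∂μ :=
    MeasureTheory.integral_map hεm ((Real.continuous_exp.comp ((continuous_const.mul (continuous_pow 2)))).aestronglyMeasurable)
  rw [← hmap, hε, gauss_aux _ hv _ hc]
  have hcoe : (((κ * Q * T_LR).toNNReal : ℝ)) = κ * Q * T_LR :=
    Real.coe_toNNReal _ hκQT.le
  have hTL2 : T_L ^ 2 = (1 / μζ ^ 2 - 1) /
      (2 * κ * Q * T_LR * (N : ℝ) ^ 2 * Real.sin φ ^ 2) := by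
    rw [hT_L, Real.sq_sqrt harg.le]
  have key : 1 + 2 * ((N : ℝ) * T_L * Real.sin φ) ^ 2 * ((κ * Q * T_LR).toNNReal : ℝ)
      = (μζ⁻¹) ^ 2 := by
    rw [hcoe]
    have hN' : ((N:ℝ)) ≠ 0 := by exact_mod_cast hN.ne'
    have h2 : 2 * ((N : ℝ) * T_L * Real.sin φ) ^ 2 * (κ * Q * T_LR)
        = 1 / μζ ^ 2 - 1 := by
      rw [mul_pow, mul_pow, hTL2]
      field_simp
    rw [h2]
    field_simp
    ring
  rw [key, Real.sqrt_sq (by positivity), inv_inv]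
end

section
/- Achievability form of Theorem 1: Let N be a positive integer, Q > 0, T_LR > 0, κ ∈ (0,1], φ ∈ ℝ with sin φ ≠ 0, and μ_ζ ∈ (0,1), and set T_L = sqrt((1/μ_ζ² − 1) / (2·κ·Q·T_LR·N²·sin²φ)). For a real random variable ε with law N(0, κ·Q·T_LR), every pilot period T with 0 ≤ T ≤ T_L satisfies E[exp(−(N·T·sin φ)²·ε²)] ≥ μ_ζ, i.e. the average received power ratio stays at or above the prescribed drop level μ_ζ. -/
open MeasureTheory ProbabilityTheory

open scoped NNReal ENNReal

lemma gaussian_exp_neg_sq_integral (v : ℝ≥0) (hv : v ≠ 0) (a : ℝ) (ha : 0 ≤ a) :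
    ∫ x, Real.exp (-a * x ^ 2) ∂(gaussianReal 0 v) = (Real.sqrt (1 + 2 * a * v))⁻¹ := by
  have hv0 : (0 : ℝ) < v := NNReal.coe_pos.mpr (pos_iff_ne_zero.mpr hv)
  rw [gaussianReal_of_var_ne_zero _ hv]
  have hpdf : gaussianPDF 0 v
      = fun x => ((Real.toNNReal (gaussianPDFReal 0 v x) : ℝ≥0) : ℝ≥0∞) := by
    ext x
    simp [gaussianPDF, ENNReal.ofReal]
  rw [hpdf, integral_withDensity_eq_integral_smul
    ((measurable_gaussianPDFReal 0 v).real_toNNReal)]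
  have h1 : ∀ x : ℝ, (Real.toNNReal (gaussianPDFReal 0 v x)) • Real.exp (-a * x ^ 2)
      = (Real.sqrt (2 * Real.pi * v))⁻¹ * Real.exp (-(a + (2 * (v : ℝ))⁻¹) * x ^ 2) := by
    intro x
    rw [NNReal.smul_def, smul_eq_mul, Real.coe_toNNReal _ (gaussianPDFReal_pos 0 v x hv).le]
    rw [gaussianPDFReal]
    rw [mul_assoc, ← Real.exp_add]
    ring_nf
  simp only [h1]
  rw [integral_const_mul, integral_gaussian]
  rw [← Real.sqrt_inv, ← Real.sqrt_mul (by positivity)]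
  rw [← Real.sqrt_inv]
  congr 1
  have hπ := Real.pi_pos
  field_simp
  ring

/-- Achievability form of Theorem 1: for every pilot period `T` with
`0 ≤ T ≤ T_L`, the average received power ratio `E[exp(−(N T sin φ)² ε²)]`
stays at or above the prescribed drop level `μζ`. -/
theorem beam_locking_time_achievability
    {Ω : Type*} [MeasurableSpace Ω] (μ : Measure Ω) [IsProbabilityMeasure μ]
    (N : ℕ) (hN : 0 < N) (Q T_LR κ : ℝ) (hQ : 0 < Q) (hT_LR : 0 < T_LR)
    (hκ : κ ∈ Set.Ioc (0 : ℝ) 1)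
    (φ : ℝ) (hφ : Real.sin φ ≠ 0) (μζ : ℝ) (hμζ : μζ ∈ Set.Ioo (0 : ℝ) 1)
    (T_L : ℝ)
    (hT_L : T_L = Real.sqrt ((1 / μζ ^ 2 - 1) /
        (2 * κ * Q * T_LR * (N : ℝ) ^ 2 * Real.sin φ ^ 2)))
    (ε : Ω → ℝ) (hε : μ.map ε = gaussianReal 0 (κ * Q * T_LR).toNNReal)
    (T : ℝ) (hT0 : 0 ≤ T) (hTL : T ≤ T_L) :
    μζ ≤ ∫ ω, Real.exp (-((N : ℝ) * T * Real.sin φ) ^ 2 * (ε ω) ^ 2) ∂μ := by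
  obtain ⟨hκ0, hκ1⟩ := hκ
  obtain ⟨hμ0, hμ1⟩ := hμζ
  set v : ℝ := κ * Q * T_LR with hvdef
  have hv : 0 < v := by positivity
  have hvnn : v.toNNReal ≠ 0 := by
    simpa using (Real.toNNReal_pos.mpr hv).ne'
  have hvcoe : ((v.toNNReal : ℝ≥0) : ℝ) = v := Real.coe_toNNReal _ hv.le
  have hεm : AEMeasurable ε μ := by
    apply aemeasurable_of_map_neZero
    rw [hε]
    exact ⟨IsProbabilityMeasure.ne_zero _⟩
  set a : ℝ := ((N : ℝ) * T * Real.sin φ) ^ 2 with hadef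
  have ha : 0 ≤ a := sq_nonneg _
  have hint : ∫ ω, Real.exp (-a * (ε ω) ^ 2) ∂μ = (Real.sqrt (1 + 2 * a * v))⁻¹ := by
    rw [← integral_map (f := fun x => Real.exp (-a * x ^ 2)) hεm
      ((show Continuous (fun x : ℝ => Real.exp (-a * x ^ 2)) from Real.continuous_exp.comp ((continuous_const.mul
        (continuous_pow 2)))).aestronglyMeasurable), hε,
      gaussian_exp_neg_sq_integral _ hvnn a ha, hvcoe]
  rw [show (-((N : ℝ) * T * Real.sin φ) ^ 2) = -a from rfl, hint]
  have hD : 0 < 2 * κ * Q * T_LR * (N : ℝ) ^ 2 * Real.sin φ ^ 2 := by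
    have : (0:ℝ) < N := by exact_mod_cast hN
    positivity
  have harg : 0 ≤ (1 / μζ ^ 2 - 1) / (2 * κ * Q * T_LR * (N : ℝ) ^ 2 * Real.sin φ ^ 2) := by
    apply div_nonneg _ hD.le
    have h2 : μζ ^ 2 < 1 := by nlinarith
    have : (1:ℝ) ≤ 1 / μζ ^ 2 := (one_le_div (by positivity)).mpr h2.le
    linarith
  have hT2 : T ^ 2 ≤ (1 / μζ ^ 2 - 1) / (2 * κ * Q * T_LR * (N : ℝ) ^ 2 * Real.sin φ ^ 2) := by
    have := pow_le_pow_left₀ hT0 hTL 2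
    rwa [hT_L, Real.sq_sqrt harg] at this
  have hkey : 1 + 2 * a * v ≤ 1 / μζ ^ 2 := by
    have h2 : 2 * a * v = (2 * κ * Q * T_LR * (N : ℝ) ^ 2 * Real.sin φ ^ 2) * T ^ 2 := by
      rw [hadef, hvdef]; ring
    have h3 := mul_le_mul_of_nonneg_left hT2 hD.le
    rw [mul_div_cancel₀ _ hD.ne'] at h3
    linarith [h2 ▸ h3]
  have hs : 0 < Real.sqrt (1 + 2 * a * v) := Real.sqrt_pos.mpr (by nlinarith)
  have hsle : Real.sqrt (1 + 2 * a * v) ≤ μζ⁻¹ := by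
    have : 1 / μζ ^ 2 = (μζ⁻¹) ^ 2 := by field_simp
    calc Real.sqrt (1 + 2 * a * v) ≤ Real.sqrt ((μζ⁻¹) ^ 2) :=
          Real.sqrt_le_sqrt (by rw [← this]; exact hkey)
      _ = μζ⁻¹ := Real.sqrt_sq (by positivity)
  calc μζ = (μζ⁻¹)⁻¹ := (inv_inv _).symm
    _ ≤ (Real.sqrt (1 + 2 * a * v))⁻¹ := inv_anti₀ hs hsle
end

section
/- Theorem 2 (outage-based pilot period): Let N be a positive integer, Q > 0, T_LR > 0, κ ∈ (0,1], φ ∈ ℝ with sin φ ≠ 0, ρ > 0, let R_f > 0 satisfy 2^{R_f} − 1 < ρ, let P_out ∈ (0,1), and let q > 0 satisfy Q(q) = P_out/2 where Q is the standard Gaussian tail function. Define T_o = sqrt( log(ρ/(2^{R_f} − 1)) / (N²·sin²φ·κ·Q·T_LR·q²) ). Then for a real random variable ε with law N(0, κ·Q·T_LR), the outage probability at fixed rate R_f satisfies P( ρ·exp(−(N·T_o·sin φ)²·ε²) ≤ 2^{R_f} − 1 ) = P_out. -/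
open MeasureTheory ProbabilityTheory

/-- The standard Gaussian tail function `Q(x) = ∫_x^∞ (2π)^(-1/2) exp(-t²/2) dt`. -/
noncomputable def gaussTail (x : ℝ) : ℝ :=
  ∫ t in Set.Ioi x, (Real.sqrt (2 * Real.pi))⁻¹ * Real.exp (-t ^ 2 / 2)

/-- Theorem 2 of the paper (outage-based pilot period): with
`T_o = sqrt( log(ρ/(2^Rf − 1)) / (N² sin²φ κ Q T_LR q²) )` where `q > 0`
satisfies `Q(q) = P_out/2`, and slope error `ε ~ N(0, κ Q T_LR)`, the outage
probability at fixed rate `Rf` equals `P_out`. -/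
theorem outage_pilot_period
    {Ω : Type*} [MeasurableSpace Ω] (μ : Measure Ω) [IsProbabilityMeasure μ]
    (N : ℕ) (hN : 0 < N) (Q T_LR κ : ℝ) (hQ : 0 < Q) (hT_LR : 0 < T_LR)
    (hκ : κ ∈ Set.Ioc (0 : ℝ) 1)
    (φ : ℝ) (hφ : Real.sin φ ≠ 0) (ρ : ℝ) (hρ : 0 < ρ)
    (Rf : ℝ) (hRf : 0 < Rf) (hRfρ : (2 : ℝ) ^ Rf - 1 < ρ)
    (P_out : ℝ) (hP_out : P_out ∈ Set.Ioo (0 : ℝ) 1)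
    (q : ℝ) (hq : 0 < q) (hqP : gaussTail q = P_out / 2)
    (T_o : ℝ)
    (hT_o : T_o = Real.sqrt (Real.log (ρ / ((2 : ℝ) ^ Rf - 1)) /
        ((N : ℝ) ^ 2 * Real.sin φ ^ 2 * κ * Q * T_LR * q ^ 2)))
    (ε : Ω → ℝ) (hε : μ.map ε = gaussianReal 0 (κ * Q * T_LR).toNNReal) :
    (μ {ω | ρ * Real.exp (-((N : ℝ) * T_o * Real.sin φ) ^ 2 * (ε ω) ^ 2)
        ≤ (2 : ℝ) ^ Rf - 1}).toReal = P_out := by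
  obtain ⟨hκ0, hκ1⟩ := hκ
  obtain ⟨hP0, hP1⟩ := hP_out
  have hc0 : (0:ℝ) < (2:ℝ)^Rf - 1 := by
    have : (1:ℝ) < (2:ℝ)^Rf :=
      (Real.one_lt_rpow_iff_of_pos (by norm_num)).2 (Or.inl ⟨by norm_num, hRf⟩)
    linarith
  set c : ℝ := (2:ℝ)^Rf - 1 with hcdef
  have hvpos : 0 < κ * Q * T_LR := by positivity
  set σ : ℝ := Real.sqrt (κ * Q * T_LR) with hσdef
  have hσ : 0 < σ := Real.sqrt_pos.2 hvpos
  have hσ2 : σ^2 = κ * Q * T_LR := Real.sq_sqrt hvpos.le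
  set v : NNReal := (κ * Q * T_LR).toNNReal with hvdef
  have hv : (v:ℝ) = κ * Q * T_LR := Real.coe_toNNReal _ hvpos.le
  have hL : 0 < Real.log (ρ / c) := Real.log_pos (by rw [lt_div_iff₀ hc0]; linarith)
  set L : ℝ := Real.log (ρ / c) with hLdef
  -- ε is a.e.-measurable
  have hεm : AEMeasurable ε μ := by
    by_contra h
    have h0 : (0 : Measure ℝ) = gaussianReal 0 v := by
      rw [← hε, Measure.map_of_not_aemeasurable h]
    have h1 := measure_univ (μ := gaussianReal 0 v)
    rw [← h0] at h1
    simp at h1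
  -- key arithmetic: a * (σ*q)^2 = L
  have hNpos : (0:ℝ) < (N:ℝ) := Nat.cast_pos.2 hN
  have hDpos : 0 < (N : ℝ) ^ 2 * Real.sin φ ^ 2 * κ * Q * T_LR * q ^ 2 := by
    have hs : 0 < Real.sin φ ^ 2 := by positivity
    positivity
  have hTo2 : T_o^2 = L / ((N : ℝ) ^ 2 * Real.sin φ ^ 2 * κ * Q * T_LR * q ^ 2) := by
    rw [hT_o]; exact Real.sq_sqrt (by positivity)
  have ha : ((N : ℝ) * T_o * Real.sin φ) ^ 2 * (σ * q)^2 = L := by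
    have : ((N : ℝ) * T_o * Real.sin φ) ^ 2 = (N:ℝ)^2 * T_o^2 * Real.sin φ^2 := by ring
    rw [this, hTo2, mul_pow, hσ2]
    field_simp
  have hapos : 0 < ((N : ℝ) * T_o * Real.sin φ) ^ 2 := by
    have hTo : 0 < T_o := by
      have : 0 < T_o^2 := by rw [hTo2]; positivity
      rcases lt_trichotomy T_o 0 with h | h | h
      · exfalso
        rw [hT_o] at h
        exact absurd h (not_lt.2 (Real.sqrt_nonneg _))
      · exfalso; rw [h] at this; simp at this
      · exact h
    have hs : Real.sin φ ≠ 0 := hφ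
    positivity
  set a : ℝ := ((N : ℝ) * T_o * Real.sin φ) ^ 2 with hadef
  -- set identification
  have hset : {ω | ρ * Real.exp (-a * (ε ω) ^ 2) ≤ c}
      = (fun ω => σ⁻¹ * ε ω) ⁻¹' {x | q ≤ |x|} := by
    ext ω
    set x := ε ω with hx
    simp only [Set.mem_setOf_eq, Set.mem_preimage]
    constructor
    · intro h
      have h1 : Real.exp (-a * x^2) ≤ c / ρ := by
        rw [le_div_iff₀ hρ]; linarith [mul_comm ρ (Real.exp (-a * x^2)), h]
      have h2 : -a * x^2 ≤ Real.log (c / ρ) := by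
        rw [Real.le_log_iff_exp_le (by positivity)]; exact h1
      have h3 : Real.log (c / ρ) = -L := by
        rw [hLdef, ← Real.log_inv, inv_div]
      have h4 : L ≤ a * x^2 := by rw [h3] at h2; linarith
      have h5 : a * (σ * q)^2 ≤ a * x^2 := by rw [ha]; exact h4
      have h6 : (σ * q)^2 ≤ x^2 := le_of_mul_le_mul_left h5 hapos
      have h7 : σ * q ≤ |x| := by
        rw [← sq_abs x] at h6
        exact (pow_le_pow_iff_left₀ (a := σ * q) (b := |x|)
          (by positivity) (abs_nonneg x) two_ne_zero).1 h6
      rw [abs_mul, abs_inv, abs_of_pos hσ, inv_mul_eq_div, le_div_iff₀ hσ]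
      linarith [h7]
    · intro h
      have h7 : σ * q ≤ |x| := by
        rw [abs_mul, abs_inv, abs_of_pos hσ, inv_mul_eq_div, le_div_iff₀ hσ] at h
        linarith
      have h6 : (σ * q)^2 ≤ x^2 := by
        rw [← sq_abs x]
        exact pow_le_pow_left₀ (by positivity) h7 2
      have h4 : L ≤ a * x^2 := by
        rw [← ha]; exact mul_le_mul_of_nonneg_left h6 hapos.le
      have h3 : Real.log (c / ρ) = -L := by
        rw [hLdef, ← Real.log_inv, inv_div]
      have h2 : -a * x^2 ≤ Real.log (c / ρ) := by rw [h3]; linarith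
      have h1 : Real.exp (-a * x^2) ≤ c / ρ := by
        rw [← Real.le_log_iff_exp_le (by positivity)]; exact h2
      rw [mul_comm]
      calc Real.exp (-a * x^2) * ρ ≤ (c / ρ) * ρ := by
            exact mul_le_mul_of_nonneg_right h1 hρ.le
        _ = c := by field_simp
  -- law of σ⁻¹ ε is standard gaussian
  have hXm : AEMeasurable (fun ω => σ⁻¹ * ε ω) μ := hεm.const_mul _
  have hmapX : μ.map (fun ω => σ⁻¹ * ε ω) = gaussianReal 0 1 := by
    have hcomp : (fun ω => σ⁻¹ * ε ω) = (fun x => σ⁻¹ * x) ∘ ε := rfl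
    rw [hcomp, ← AEMeasurable.map_map_of_aemeasurable
      (measurable_const_mul σ⁻¹).aemeasurable hεm, hε]
    have := gaussianReal_map_const_mul (μ := 0) (v := v) σ⁻¹
    rw [this, mul_zero]
    congr 1
    ext
    push_cast
    rw [hv, ← hσ2]
    field_simp
  -- compute
  have hSmeas : MeasurableSet {x : ℝ | q ≤ |x|} :=
    measurableSet_le measurable_const measurable_id.abs
  have key : μ {ω | ρ * Real.exp (-a * (ε ω) ^ 2) ≤ c} = gaussianReal 0 1 {x : ℝ | q ≤ |x|} := by
    rw [hset, ← Measure.map_apply_of_aemeasurable hXm hSmeas, hmapX]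
  rw [key]
  have hSeq : {x : ℝ | q ≤ |x|} = Set.Iic (-q) ∪ Set.Ici q := by
    ext x
    simp only [Set.mem_setOf_eq, Set.mem_union, Set.mem_Iic, Set.mem_Ici, le_abs, le_neg]
    tauto
  rw [hSeq, gaussianReal_apply_eq_integral 0 one_ne_zero,
    ENNReal.toReal_ofReal (integral_nonneg fun x => gaussianPDFReal_nonneg _ _ _)]
  have hpdf : ∀ x : ℝ, gaussianPDFReal 0 1 x
      = (Real.sqrt (2 * Real.pi))⁻¹ * Real.exp (-x ^ 2 / 2) := by
    intro x
    simp [gaussianPDFReal]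
  have hInt : IntegrableOn (gaussianPDFReal 0 1) (Set.Iic (-q)) volume :=
    (integrable_gaussianPDFReal 0 1).integrableOn
  have hInt2 : IntegrableOn (gaussianPDFReal 0 1) (Set.Ici q) volume :=
    (integrable_gaussianPDFReal 0 1).integrableOn
  rw [setIntegral_union (Set.Iic_disjoint_Ici.2 (by linarith)) measurableSet_Ici hInt hInt2]
  have hIci : ∫ x in Set.Ici q, gaussianPDFReal 0 1 x = gaussTail q := by
    rw [integral_Ici_eq_integral_Ioi]
    unfold gaussTail
    exact setIntegral_congr_fun measurableSet_Ioi fun x _ => hpdf x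
  have hIic : ∫ x in Set.Iic (-q), gaussianPDFReal 0 1 x = gaussTail q := by
    have heven : ∀ x : ℝ, gaussianPDFReal 0 1 (-x) = gaussianPDFReal 0 1 x := by
      intro x; rw [hpdf, hpdf, neg_pow]; ring_nf
    calc ∫ x in Set.Iic (-q), gaussianPDFReal 0 1 x
        = ∫ x in Set.Iic (-q), gaussianPDFReal 0 1 (-x) := by
          exact setIntegral_congr_fun measurableSet_Iic fun x _ => (heven x).symm
      _ = ∫ x in Set.Ioi q, gaussianPDFReal 0 1 x := by
          rw [integral_comp_neg_Iic, neg_neg]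
      _ = gaussTail q := setIntegral_congr_fun measurableSet_Ioi fun x _ => hpdf x
  rw [hIci, hIic, hqP]
  ring
end
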